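/- With W_n(z) defined by W_0(z)=2(1+z), W_1(z)=8(5+3z), W_2(z)=16(3+45z+16z^2), and the recurrence W_n = 20z·W_{n-1} + 8(3-8z)·W_{n-2} - 384z^2·W_{n-3} (n even), W_n = 20·W_{n-1} + 8(3-8z)·W_{n-2} - 384z·W_{n-3} (n odd): for every n ≥ 2, the roots of W_n and W_{n-2} strictly interlace; that is, if x_{n,1} < ⋯ < x_{n,d_n} are the roots of W_n and x_{n-2,1} < ⋯ < x_{n-2,d_n - 1} those of W_{n-2} (where d_n = ⌈(n+1)/2⌉), then x_{n,1} < x_{n-2,1} < x_{n,2} < x_{n-2,2} < ⋯ < x_{n-2,d_n−1} < x_{n,d_n}. -/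
import Mathlib
open Polynomial Filter

def RD (p : Polynomial ℝ) (d : ℕ) (r : ℕ → ℝ) : Prop :=
  p.roots.card = d ∧
  p.roots.toFinset = Finset.image r (Finset.Icc 1 d) ∧
  (∀ i j, 1 ≤ i → i < j → j ≤ d → r i < r j)

lemma injOn_of_mono {d : ℕ} {r : ℕ → ℝ}
    (hm : ∀ i j, 1 ≤ i → i < j → j ≤ d → r i < r j) :
    Set.InjOn r (Finset.Icc 1 d) := by
  intro a ha b hb hab
  simp only [Finset.coe_Icc, Set.mem_Icc] at ha hb
  by_contra hne
  rcases Nat.lt_or_ge a b with h | h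
  · exact absurd hab (ne_of_lt (hm a b ha.1 h hb.2))
  · have h' : b < a := by omega
    exact absurd hab.symm (ne_of_lt (hm b a hb.1 h' ha.2))

lemma neg_one_pow_add_two (k : ℕ) : ((-1:ℝ))^(k+2) = (-1)^k := by
  rw [pow_add]; norm_num

lemma neg_one_pow_succ' (k : ℕ) : ((-1:ℝ))^(k+1) = -((-1:ℝ)^k) := by
  rw [pow_succ]; ring

lemma neg_one_pow_two_mul' (k : ℕ) : ((-1:ℝ))^(2*k) = 1 := by
  rw [pow_mul]; norm_num

def Shifted (a b : ℕ) (r s : ℕ → ℝ) : Prop :=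
  (∀ j, 1 ≤ j → j ≤ a → s j < r j) ∧ (∀ j, 1 ≤ j → j + 1 ≤ b → r j < s (j+1))

def TwoApart (a : ℕ) (r t : ℕ → ℝ) : Prop :=
  ∀ j, 1 ≤ j → j ≤ a → t j < r j ∧ r j < t (j+1)

def Pack (p : Polynomial ℝ) (d : ℕ) (lc : ℝ) (r : ℕ → ℝ) : Prop :=
  p.natDegree = d ∧ p.leadingCoeff = lc ∧ 0 < p.eval 0 ∧ RD p d r ∧
  ∀ i, 1 ≤ i → i ≤ d → r i < 0

lemma rd_eval_zero {p : Polynomial ℝ} {d : ℕ} {r : ℕ → ℝ} (hrd : RD p d r)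
    (i : ℕ) (h1 : 1 ≤ i) (h2 : i ≤ d) : p.eval (r i) = 0 := by
  have hmem : r i ∈ p.roots.toFinset := by
    rw [hrd.2.1]; exact Finset.mem_image_of_mem r (Finset.mem_Icc.mpr ⟨h1, h2⟩)
  rw [Multiset.mem_toFinset] at hmem
  exact isRoot_of_mem_roots hmem


lemma sign_eval (p : Polynomial ℝ) (d : ℕ) (r : ℕ → ℝ)
    (hd : p.natDegree = d) (hlc : 0 < p.leadingCoeff)
    (hrd : RD p d r)
    (t : ℝ) (k : ℕ) (hk : k ≤ d)
    (hlow : ∀ j, 1 ≤ j → j ≤ k → r j < t)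
    (hhigh : ∀ j, k + 1 ≤ j → j ≤ d → t < r j) :
    0 < (-1 : ℝ) ^ (d + k) * p.eval t := by
  obtain ⟨hcard, hset, hmono⟩ := hrd
  have hinj : Set.InjOn r (Finset.Icc 1 d) := injOn_of_mono hmono
  -- nodup roots
  have hndcard : p.roots.toFinset.card = Multiset.card p.roots := by
    rw [hset, hcard, Finset.card_image_of_injOn hinj, Nat.card_Icc]
    omega
  have hnd : p.roots.Nodup := Multiset.toFinset_card_eq_card_iff_nodup.mp hndcard
  have hfac := Polynomial.C_leadingCoeff_mul_prod_multiset_X_sub_C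
    (p := p) (by rw [hcard, hd])
  have heval : p.eval t = p.leadingCoeff * (p.roots.map fun a => t - a).prod := by
    conv_lhs => rw [← hfac]
    simp [eval_multiset_prod, Multiset.map_map, Function.comp]
  -- prod over multiset = prod over finset
  have hroots_val : p.roots.toFinset.val = p.roots := by
    simp [Multiset.toFinset_val, Multiset.dedup_eq_self.mpr hnd]
  have hprod1 : (p.roots.map fun a => t - a).prod = ∏ a ∈ p.roots.toFinset, (t - a) := by
    rw [Finset.prod, hroots_val]
  have hprod2 : ∏ a ∈ p.roots.toFinset, (t - a) = ∏ j ∈ Finset.Icc 1 d, (t - r j) := by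
    rw [hset, Finset.prod_image (fun a ha b hb h => hinj (by simpa using ha) (by simpa using hb) h)]
  -- split
  have hsplit : (∏ j ∈ Finset.Ioc 0 k, (t - r j)) * ∏ j ∈ Finset.Ioc k d, (t - r j)
      = ∏ j ∈ Finset.Icc 1 d, (t - r j) := by
    have hicc : Finset.Icc 1 d = Finset.Ioc 0 d := by
      ext x; simp [Nat.lt_iff_add_one_le]
    rw [hicc]
    exact Finset.prod_Ioc_consecutive _ (Nat.zero_le k) hk
  have hpos1 : 0 < ∏ j ∈ Finset.Ioc 0 k, (t - r j) := by
    apply Finset.prod_pos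
    intro j hj
    simp only [Finset.mem_Ioc] at hj
    have := hlow j hj.1 hj.2
    linarith
  have hneg : ∏ j ∈ Finset.Ioc k d, (t - r j)
      = (-1:ℝ)^(d - k) * ∏ j ∈ Finset.Ioc k d, (r j - t) := by
    rw [← Nat.card_Ioc k d, ← Finset.prod_const, ← Finset.prod_mul_distrib]
    apply Finset.prod_congr rfl
    intro j hj
    ring
  have hpos2 : 0 < ∏ j ∈ Finset.Ioc k d, (r j - t) := by
    apply Finset.prod_pos
    intro j hj
    simp only [Finset.mem_Ioc] at hj
    have := hhigh j hj.1 hj.2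
    linarith
  have hpow : (-1:ℝ)^(d+k) * (-1:ℝ)^(d-k) = 1 := by
    rw [← pow_add]
    have : d + k + (d - k) = 2 * d := by omega
    rw [this, pow_mul]
    norm_num
  have : (-1:ℝ)^(d+k) * p.eval t
      = ((-1:ℝ)^(d+k) * (-1:ℝ)^(d-k)) * (p.leadingCoeff *
        ((∏ j ∈ Finset.Ioc 0 k, (t - r j)) * ∏ j ∈ Finset.Ioc k d, (r j - t))) := by
    rw [heval, hprod1, hprod2, ← hsplit, hneg]; ring
  rw [this, hpow, one_mul]
  positivity


lemma exists_root_between (p : Polynomial ℝ) (a b : ℝ) (hab : a < b)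
    (h : p.eval a * p.eval b < 0) : ∃ x, a < x ∧ x < b ∧ p.eval x = 0 := by
  have hc : ContinuousOn (fun x => p.eval x) (Set.Icc a b) := p.continuous.continuousOn
  rcases lt_or_ge (p.eval a) 0 with ha | ha
  · have hb : 0 < p.eval b := by nlinarith
    have := intermediate_value_Ioo hab.le hc
    have h0 : (0:ℝ) ∈ Set.Ioo (p.eval a) (p.eval b) := ⟨ha, hb⟩
    obtain ⟨x, hx, hx0⟩ := this h0
    exact ⟨x, hx.1, hx.2, hx0⟩
  · have ha' : 0 < p.eval a := by
      rcases ha.lt_or_eq with h' | h'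
      · exact h'
      · exfalso; rw [← h'] at h; simp at h
    have hb : p.eval b < 0 := by nlinarith
    have := intermediate_value_Ioo' hab.le hc
    have h0 : (0:ℝ) ∈ Set.Ioo (p.eval b) (p.eval a) := ⟨hb, ha'⟩
    obtain ⟨x, hx, hx0⟩ := this h0
    exact ⟨x, hx.1, hx.2, hx0⟩

lemma count_roots (p : Polynomial ℝ) (D : ℕ) (hD1 : 1 ≤ D)
    (hdeg : p.natDegree = D) (hp : p ≠ 0)
    (s : ℕ → ℝ) (hmono : ∀ i j, i < j → j ≤ D → s i < s j)
    (hsign : ∀ i, i ≤ D → 0 < (-1:ℝ)^(D+i) * p.eval (s i)) :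
    ∃ u : ℕ → ℝ, RD p D u ∧ ∀ i, 1 ≤ i → i ≤ D → s (i-1) < u i ∧ u i < s i := by
  have key : ∀ i, 1 ≤ i → i ≤ D → ∃ x, s (i-1) < x ∧ x < s i ∧ p.eval x = 0 := by
    intro i h1 h2
    apply exists_root_between p _ _ (hmono (i-1) i (by omega) h2)
    have ha := hsign (i-1) (by omega)
    have hb := hsign i h2
    have hpow : (-1:ℝ)^(D+(i-1)) * (-1:ℝ)^(D+i) = -1 := by
      rw [← pow_add]
      have : D + (i-1) + (D + i) = 2*(D+i-1) + 1 := by omega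
      rw [this, pow_succ, pow_mul]
      norm_num
    nlinarith [ha, hb]
  classical
  set u : ℕ → ℝ := fun i => if h : 1 ≤ i ∧ i ≤ D then (key i h.1 h.2).choose else 0 with hu
  have hui : ∀ i, 1 ≤ i → i ≤ D → s (i-1) < u i ∧ u i < s i ∧ p.eval (u i) = 0 := by
    intro i h1 h2
    have : u i = (key i h1 h2).choose := by simp [hu, h1, h2]
    rw [this]
    exact (key i h1 h2).choose_spec
  have humono : ∀ i j, 1 ≤ i → i < j → j ≤ D → u i < u j := by
    intro i j h1 hij h2
    have hi := hui i h1 (by omega)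
    have hj := hui j (by omega) h2
    have : s i ≤ s (j-1) := by
      rcases Nat.lt_or_ge i (j-1) with h | h
      · exact (hmono i (j-1) h (by omega)).le
      · have he : i = j - 1 := by omega
        exact le_of_eq (congrArg s he)
    linarith [hi.2.1, hj.1]
  have hinj : Set.InjOn u (Finset.Icc 1 D) := injOn_of_mono humono
  have hsub : Finset.image u (Finset.Icc 1 D) ⊆ p.roots.toFinset := by
    intro a ha
    simp only [Finset.mem_image, Finset.mem_Icc] at ha
    obtain ⟨i, ⟨hi1, hi2⟩, rfl⟩ := ha
    rw [Multiset.mem_toFinset, mem_roots hp]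
    exact (hui i hi1 hi2).2.2
  have hcard_img : (Finset.image u (Finset.Icc 1 D)).card = D := by
    rw [Finset.card_image_of_injOn hinj, Nat.card_Icc]; omega
  have hchain : D ≤ p.roots.toFinset.card := hcard_img ▸ Finset.card_le_card hsub
  have hchain2 : p.roots.toFinset.card ≤ Multiset.card p.roots := p.roots.toFinset_card_le
  have hchain3 : Multiset.card p.roots ≤ D := hdeg ▸ p.card_roots'
  have hcard : Multiset.card p.roots = D := by omega
  have hset : p.roots.toFinset = Finset.image u (Finset.Icc 1 D) :=
    (Finset.eq_of_subset_of_card_le hsub (by omega)).symm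
  exact ⟨u, ⟨hcard, hset, humono⟩, fun i h1 h2 => ⟨(hui i h1 h2).1, (hui i h1 h2).2.1⟩⟩

lemma exists_far_left (p : Polynomial ℝ) (D : ℕ) (hD : p.natDegree = D) (h1 : 1 ≤ D)
    (hlc : 0 < p.leadingCoeff) (β : ℝ) :
    ∃ b, b < β ∧ 0 < (-1:ℝ)^D * p.eval b := by
  have hXne : ((-X : Polynomial ℝ)).natDegree = 1 := by simp
  set q : Polynomial ℝ := C ((-1:ℝ)^D) * p.comp (-X) with hq
  have hqlc : q.leadingCoeff = p.leadingCoeff := by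
    rw [hq, leadingCoeff_mul, leadingCoeff_C, leadingCoeff_comp (by rw [hXne]; norm_num)]
    have : (-X : Polynomial ℝ).leadingCoeff = -1 := by simp
    rw [this, hD]
    rcases Nat.even_or_odd D with h | h
    · rw [h.neg_one_pow]; ring
    · rw [h.neg_one_pow]; ring
  have hqdeg : q.natDegree = D := by
    rw [hq]
    rw [natDegree_C_mul (by positivity), natDegree_comp, hXne, hD, mul_one]
  have hq0 : 0 < q.degree := by
    rw [degree_eq_natDegree (fun h => by simp [h] at hqdeg; omega), hqdeg]
    exact_mod_cast h1
  have htend : Tendsto (fun x => eval x q) atTop atTop :=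
    q.tendsto_atTop_of_leadingCoeff_nonneg hq0 (hqlc ▸ hlc.le)
  have hev : ∀ᶠ x in atTop, 1 ≤ eval x q := htend.eventually_ge_atTop 1
  have hev2 : ∀ᶠ x : ℝ in atTop, -β < x := eventually_gt_atTop (-β)
  obtain ⟨x, hx1, hx2⟩ := (hev.and hev2).exists
  refine ⟨-x, by linarith, ?_⟩
  have : eval x q = (-1:ℝ)^D * p.eval (-x) := by
    rw [hq]; simp [eval_comp]
  rw [← this]; linarith


lemma sorted_unique : ∀ (d : ℕ) (u v : ℕ → ℝ),
    (∀ i j, 1 ≤ i → i < j → j ≤ d → u i < u j) →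
    (∀ i j, 1 ≤ i → i < j → j ≤ d → v i < v j) →
    Finset.image u (Finset.Icc 1 d) = Finset.image v (Finset.Icc 1 d) →
    ∀ i, 1 ≤ i → i ≤ d → u i = v i := by
  intro d
  induction d with
  | zero => intro u v _ _ _ i h1 h2; omega
  | succ d ih =>
    intro u v hu hv himg i h1 h2
    have hmemu : u (d+1) ∈ Finset.image u (Finset.Icc 1 (d+1)) :=
      Finset.mem_image_of_mem u (by simp)
    have hmemv : v (d+1) ∈ Finset.image v (Finset.Icc 1 (d+1)) :=
      Finset.mem_image_of_mem v (by simp)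
    have hmaxu : ∀ a ∈ Finset.image u (Finset.Icc 1 (d+1)), a ≤ u (d+1) := by
      intro a ha
      simp only [Finset.mem_image, Finset.mem_Icc] at ha
      obtain ⟨j, ⟨hj1, hj2⟩, rfl⟩ := ha
      rcases Nat.lt_or_ge j (d+1) with h | h
      · exact (hu j (d+1) hj1 h le_rfl).le
      · have : j = d+1 := by omega
        rw [this]
    have hmaxv : ∀ a ∈ Finset.image v (Finset.Icc 1 (d+1)), a ≤ v (d+1) := by
      intro a ha
      simp only [Finset.mem_image, Finset.mem_Icc] at ha
      obtain ⟨j, ⟨hj1, hj2⟩, rfl⟩ := ha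
      rcases Nat.lt_or_ge j (d+1) with h | h
      · exact (hv j (d+1) hj1 h le_rfl).le
      · have : j = d+1 := by omega
        rw [this]
    have htop : u (d+1) = v (d+1) := by
      have h1' : u (d+1) ≤ v (d+1) := hmaxv _ (himg ▸ hmemu)
      have h2' : v (d+1) ≤ u (d+1) := hmaxu _ (himg.symm ▸ hmemv)
      linarith
    rcases Nat.lt_or_ge i (d+1) with hlt | hge
    · -- use IH on restricted images
      have hiccu : Finset.Icc 1 (d+1) = insert (d+1) (Finset.Icc 1 d) := by
        ext x; simp [Finset.mem_Icc]; omega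
      have hrest : ∀ (w : ℕ → ℝ), (∀ i j, 1 ≤ i → i < j → j ≤ d+1 → w i < w j) →
          Finset.image w (Finset.Icc 1 d)
            = (Finset.image w (Finset.Icc 1 (d+1))).erase (w (d+1)) := by
        intro w hw
        ext a
        simp only [Finset.mem_image, Finset.mem_erase, Finset.mem_Icc]
        constructor
        · rintro ⟨j, ⟨hj1, hj2⟩, rfl⟩
          refine ⟨ne_of_lt (hw j (d+1) hj1 (by omega) le_rfl), j, ⟨hj1, by omega⟩, rfl⟩
        · rintro ⟨hne, j, ⟨hj1, hj2⟩, rfl⟩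
          refine ⟨j, ⟨hj1, ?_⟩, rfl⟩
          rcases Nat.lt_or_ge j (d+1) with h | h
          · omega
          · exfalso; apply hne; congr 1; omega
      have himg' : Finset.image u (Finset.Icc 1 d) = Finset.image v (Finset.Icc 1 d) := by
        rw [hrest u hu, hrest v hv, himg, htop]
      exact ih u v (fun i j a b c => hu i j a b (by omega))
        (fun i j a b c => hv i j a b (by omega)) himg' i h1 (by omega)
    · have : i = d+1 := by omega
      rw [this]; exact htop


set_option maxHeartbeats 1000000 in
lemma stepA (t : ℕ) (p0 p1 p2 p3 : Polynomial ℝ) (c0 c1 c2 : ℝ)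
    (ra rb rc : ℕ → ℝ)
    (hrece : p3 = 20 * p2 + 8*(3-8*X)*p1 - 384*X*p0)
    (hc0 : 0 < c0) (hc1 : 0 < c1) (hc2 : 0 < c2)
    (h3pos : 0 < 20*c2 - 64*c1 - 384*c0)
    (P0 : Pack p0 (t+1) c0 ra) (P1 : Pack p1 (t+1) c1 rb) (P2 : Pack p2 (t+2) c2 rc)
    (Sab : Shifted (t+1) (t+1) ra rb) (Sbc : Shifted (t+1) (t+2) rb rc)
    (Tac : TwoApart (t+1) ra rc) :
    ∃ u, Pack p3 (t+2) (20*c2 - 64*c1 - 384*c0) u ∧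
      Shifted (t+2) (t+2) rc u ∧ TwoApart (t+1) rb u := by
  obtain ⟨deg0, lc0, ev0, rd0, neg0⟩ := P0
  obtain ⟨deg1, lc1, ev1, rd1, neg1⟩ := P1
  obtain ⟨deg2, lc2, ev2, rd2, neg2⟩ := P2
  have hlc0 : 0 < p0.leadingCoeff := by rw [lc0]; exact hc0
  have hlc1 : 0 < p1.leadingCoeff := by rw [lc1]; exact hc1
  have hlc2 : 0 < p2.leadingCoeff := by rw [lc2]; exact hc2
  have hne1 : p1 ≠ 0 := leadingCoeff_ne_zero.mp (ne_of_gt hlc1)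
  have hne2 : p2 ≠ 0 := leadingCoeff_ne_zero.mp (ne_of_gt hlc2)
  -- C-normal form
  have hW' : p3 = C 20 * p2 + C 24 * p1 - C 64 * (X * p1) - C 384 * (X * p0) := by
    rw [hrece]; simp only [map_ofNat]; ring
  -- natDegree bound
  have hd3le : p3.natDegree ≤ t + 2 := by
    rw [hW']
    refine (natDegree_sub_le _ _).trans (max_le ((natDegree_sub_le _ _).trans
      (max_le ((natDegree_add_le _ _).trans (max_le ?_ ?_)) ?_)) ?_)
    · exact (natDegree_C_mul_le _ _).trans (by rw [deg2])
    · exact (natDegree_C_mul_le _ _).trans (by rw [deg1]; omega)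
    · refine (natDegree_C_mul_le _ _).trans (natDegree_mul_le.trans ?_)
      rw [natDegree_X, deg1]; omega
    · refine (natDegree_C_mul_le _ _).trans (natDegree_mul_le.trans ?_)
      rw [natDegree_X, deg0]; omega
  -- top coefficient
  have htop2 : p2.coeff (t+2) = c2 := by rw [← deg2, coeff_natDegree]; exact lc2
  have htop1 : p1.coeff (t+1) = c1 := by rw [← deg1, coeff_natDegree]; exact lc1
  have htop0 : p0.coeff (t+1) = c0 := by rw [← deg0, coeff_natDegree]; exact lc0
  have hcoeff : p3.coeff (t+2) = 20*c2 - 64*c1 - 384*c0 := by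
    have e1 : (X * p1).coeff (t+2) = p1.coeff (t+1) := by
      rw [show t+2 = (t+1)+1 by omega, coeff_X_mul]
    have e0 : (X * p0).coeff (t+2) = p0.coeff (t+1) := by
      rw [show t+2 = (t+1)+1 by omega, coeff_X_mul]
    have hz : p1.coeff (t+2) = 0 := coeff_eq_zero_of_natDegree_lt (by rw [deg1]; omega)
    rw [hW']
    simp only [coeff_sub, coeff_add, coeff_C_mul, e1, e0, hz, htop2, htop1, htop0]
    ring
  have hdeg3 : p3.natDegree = t+2 :=
    le_antisymm hd3le (le_natDegree_of_ne_zero (by rw [hcoeff]; exact ne_of_gt h3pos))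
  have hlc3 : p3.leadingCoeff = 20*c2 - 64*c1 - 384*c0 := by
    rw [← coeff_natDegree, hdeg3, hcoeff]
  have hlc3pos : 0 < p3.leadingCoeff := by rw [hlc3]; exact h3pos
  have hne3 : p3 ≠ 0 := leadingCoeff_ne_zero.mp (ne_of_gt hlc3pos)
  have hev3 : 0 < p3.eval 0 := by
    rw [hW']
    simp only [eval_sub, eval_add, eval_mul, eval_C, eval_X, zero_mul, mul_zero, sub_zero]
    linarith
  -- roots as values
  have hroot1 : ∀ i, 1 ≤ i → i ≤ t+1 → p1.eval (rb i) = 0 := fun i h1 h2 =>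
    rd_eval_zero rd1 i h1 h2
  have hroot2 : ∀ i, 1 ≤ i → i ≤ t+2 → p2.eval (rc i) = 0 := fun i h1 h2 =>
    rd_eval_zero rd2 i h1 h2
  have hmono1 := rd1.2.2
  have hmono2 := rd2.2.2
  -- ==================== chain 1 : points at roots of p1 ====================
  obtain ⟨b, hbβ, hbsign⟩ := exists_far_left p3 (t+2) hdeg3 (by omega) hlc3pos (rb 1)
  set s1 : ℕ → ℝ := fun i => if i = 0 then b else if i ≤ t+1 then rb i else 0 with hs1
  have hs1v : ∀ i, 1 ≤ i → i ≤ t+1 → s1 i = rb i := by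
    intro i h1 h2; simp only [hs1]; rw [if_neg (by omega), if_pos h2]
  have hs1top : s1 (t+2) = 0 := by simp only [hs1]; rw [if_neg (by omega), if_neg (by omega)]
  have hs1b : s1 0 = b := by simp [hs1]
  have hs1mono : ∀ i j, i < j → j ≤ t+2 → s1 i < s1 j := by
    intro i j hij hj
    rcases Nat.eq_zero_or_pos i with rfl | hipos
    · rw [hs1b]
      rcases Nat.lt_or_ge j (t+2) with h | h
      · rw [hs1v j (by omega) (by omega)]
        rcases Nat.eq_or_lt_of_le (show 1 ≤ j by omega) with h' | h'
        · rw [← h']; exact hbβ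
        · exact hbβ.trans (hmono1 1 j le_rfl h' (by omega))
      · have : j = t+2 := by omega
        rw [this, hs1top]
        exact hbβ.trans (neg1 1 le_rfl (by omega))
    · have hi : i ≤ t+1 := by omega
      rw [hs1v i hipos hi]
      rcases Nat.lt_or_ge j (t+2) with h | h
      · rw [hs1v j (by omega) (by omega)]
        exact hmono1 i j hipos hij (by omega)
      · have : j = t+2 := by omega
        rw [this, hs1top]
        exact neg1 i hipos hi
  have hs1sign : ∀ i, i ≤ t+2 → 0 < (-1:ℝ)^(t+2+i) * p3.eval (s1 i) := by
    intro i hi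
    rcases Nat.eq_zero_or_pos i with rfl | hipos
    · rw [hs1b]; simpa using hbsign
    rcases Nat.lt_or_ge i (t+2) with hilt | hige
    · have hile : i ≤ t+1 := by omega
      rw [hs1v i hipos hile]
      have hy : rb i < 0 := neg1 i hipos hile
      have hyroot : p1.eval (rb i) = 0 := hroot1 i hipos hile
      -- sign of p2 at rb i
      have hE2 : 0 < (-1:ℝ)^(t+2+i) * p2.eval (rb i) := by
        apply sign_eval p2 (t+2) rc deg2 hlc2 rd2 (rb i) i (by omega)
        · intro j hj1 hj2
          rcases Nat.eq_or_lt_of_le hj2 with h' | h'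
          · rw [h']; exact Sbc.1 i hipos hile
          · exact (hmono2 j i hj1 h' (by omega)).trans (Sbc.1 i hipos hile)
        · intro j hj1 hj2
          have h1 : rb i < rc (i+1) := Sbc.2 i hipos (by omega)
          rcases Nat.eq_or_lt_of_le hj1 with h' | h'
          · rw [← h']; exact h1
          · exact h1.trans (hmono2 (i+1) j (by omega) h' hj2)
      -- sign of p0 at rb i
      have hE0 : 0 < (-1:ℝ)^(t+1+(i-1)) * p0.eval (rb i) := by
        apply sign_eval p0 (t+1) ra deg0 hlc0 rd0 (rb i) (i-1) (by omega)
        · intro j hj1 hj2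
          have h1 : ra (i-1) < rb i := by
            have := Sab.2 (i-1) (by omega) (by omega)
            rwa [show i-1+1 = i by omega] at this
          rcases Nat.eq_or_lt_of_le hj2 with h' | h'
          · rw [h']; exact h1
          · exact (rd0.2.2 j (i-1) hj1 h' (by omega)).trans h1
        · intro j hj1 hj2
          have h1 : rb i < ra i := Sab.1 i hipos (by omega)
          have hj1' : i ≤ j := by omega
          rcases Nat.eq_or_lt_of_le hj1' with h' | h'
          · rw [← h']; exact h1
          · exact h1.trans (rd0.2.2 i j hipos h' hj2)
      rw [show t+1+(i-1) = t+i by omega] at hE0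
      rw [show t+2+i = (t+i)+2 by omega, neg_one_pow_add_two] at hE2 ⊢
      have hPy : p3.eval (rb i) = 20 * p2.eval (rb i) - 384*(rb i * p0.eval (rb i)) := by
        rw [hW']
        simp only [eval_sub, eval_add, eval_mul, eval_C, eval_X, hyroot, mul_zero]
        ring
      rw [hPy]
      nlinarith [hE2, hE0, mul_pos (neg_pos.mpr hy) hE0]
    · have hieq : i = t+2 := by omega
      rw [hieq, hs1top, show t+2+(t+2) = 2*(t+2) by omega, neg_one_pow_two_mul']
      simpa using hev3
  obtain ⟨u, rdu, hu⟩ := count_roots p3 (t+2) (by omega) hdeg3 hne3 s1 hs1mono hs1sign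
  have hTbu : TwoApart (t+1) rb u := by
    intro j hj1 hj2
    constructor
    · have := (hu j hj1 (by omega)).2
      rwa [hs1v j hj1 hj2] at this
    · have := (hu (j+1) (by omega) (by omega)).1
      rwa [show j+1-1 = j by omega, hs1v j hj1 hj2] at this
  have hnegu : ∀ i, 1 ≤ i → i ≤ t+2 → u i < 0 := by
    intro i h1 h2
    have := (hu i h1 h2).2
    rcases Nat.lt_or_ge i (t+2) with h | h
    · rw [hs1v i h1 (by omega)] at this
      exact this.trans (neg1 i h1 (by omega))
    · rw [show i = t+2 by omega, hs1top] at this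
      rw [show i = t+2 by omega]
      exact this
  -- ==================== chain 2 : points at roots of p2 ====================
  obtain ⟨b', hb'β, hb'sign⟩ := exists_far_left p3 (t+2) hdeg3 (by omega) hlc3pos (rc 1)
  set s2 : ℕ → ℝ := fun i => if i = 0 then b' else rc i with hs2
  have hs2v : ∀ i, 1 ≤ i → s2 i = rc i := by
    intro i h1; simp only [hs2]; rw [if_neg (by omega)]
  have hs2b : s2 0 = b' := by simp [hs2]
  have hs2mono : ∀ i j, i < j → j ≤ t+2 → s2 i < s2 j := by
    intro i j hij hj
    rcases Nat.eq_zero_or_pos i with rfl | hipos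
    · rw [hs2b, hs2v j (by omega)]
      rcases Nat.eq_or_lt_of_le (show 1 ≤ j by omega) with h' | h'
      · rw [← h']; exact hb'β
      · exact hb'β.trans (hmono2 1 j le_rfl h' hj)
    · rw [hs2v i hipos, hs2v j (by omega)]
      exact hmono2 i j hipos hij hj
  have hs2sign : ∀ i, i ≤ t+2 → 0 < (-1:ℝ)^(t+2+i) * p3.eval (s2 i) := by
    intro i hi
    rcases Nat.eq_zero_or_pos i with rfl | hipos
    · rw [hs2b]; simpa using hb'sign
    rw [hs2v i hipos]
    have hz : rc i < 0 := neg2 i hipos hi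
    have hzroot : p2.eval (rc i) = 0 := hroot2 i hipos hi
    -- sign of p1 at rc i
    have hE1 : 0 < (-1:ℝ)^(t+1+(i-1)) * p1.eval (rc i) := by
      apply sign_eval p1 (t+1) rb deg1 hlc1 rd1 (rc i) (i-1) (by omega)
      · intro j hj1 hj2
        have h1 : rb (i-1) < rc i := by
          have := Sbc.2 (i-1) (by omega) (by omega)
          rwa [show i-1+1 = i by omega] at this
        rcases Nat.eq_or_lt_of_le hj2 with h' | h'
        · rw [h']; exact h1
        · exact (hmono1 j (i-1) hj1 h' (by omega)).trans h1
      · intro j hj1 hj2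
        have hile : i ≤ t+1 := by omega
        have h1 : rc i < rb i := Sbc.1 i hipos hile
        have hj1' : i ≤ j := by omega
        rcases Nat.eq_or_lt_of_le hj1' with h' | h'
        · rw [← h']; exact h1
        · exact h1.trans (hmono1 i j hipos h' hj2)
    -- sign of p0 at rc i
    have hE0 : 0 < (-1:ℝ)^(t+1+(i-1)) * p0.eval (rc i) := by
      apply sign_eval p0 (t+1) ra deg0 hlc0 rd0 (rc i) (i-1) (by omega)
      · intro j hj1 hj2
        have h1 : ra (i-1) < rc i := by
          have := (Tac (i-1) (by omega) (by omega)).2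
          rwa [show i-1+1 = i by omega] at this
        rcases Nat.eq_or_lt_of_le hj2 with h' | h'
        · rw [h']; exact h1
        · exact (rd0.2.2 j (i-1) hj1 h' (by omega)).trans h1
      · intro j hj1 hj2
        have hile : i ≤ t+1 := by omega
        have h1 : rc i < ra i := (Tac i hipos hile).1
        have hj1' : i ≤ j := by omega
        rcases Nat.eq_or_lt_of_le hj1' with h' | h'
        · rw [← h']; exact h1
        · exact h1.trans (rd0.2.2 i j hipos h' hj2)
    rw [show t+1+(i-1) = t+i by omega] at hE0 hE1
    rw [show t+2+i = (t+i)+2 by omega, neg_one_pow_add_two]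
    have hPz : p3.eval (rc i)
        = 24 * p1.eval (rc i) - 64*(rc i * p1.eval (rc i)) - 384*(rc i * p0.eval (rc i)) := by
      rw [hW']
      simp only [eval_sub, eval_add, eval_mul, eval_C, eval_X, hzroot, mul_zero]
      ring
    rw [hPz]
    nlinarith [hE1, hE0, mul_pos (neg_pos.mpr hz) hE1, mul_pos (neg_pos.mpr hz) hE0]
  obtain ⟨v, rdv, hv⟩ := count_roots p3 (t+2) (by omega) hdeg3 hne3 s2 hs2mono hs2sign
  have huv : ∀ i, 1 ≤ i → i ≤ t+2 → u i = v i := by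
    apply sorted_unique (t+2) u v rdu.2.2 rdv.2.2
    rw [← rdu.2.1, ← rdv.2.1]
  have hScu : Shifted (t+2) (t+2) rc u := by
    constructor
    · intro j hj1 hj2
      rw [huv j hj1 hj2]
      have := (hv j hj1 hj2).2
      rwa [hs2v j hj1] at this
    · intro j hj1 hj2
      rw [huv (j+1) (by omega) (by omega)]
      have := (hv (j+1) (by omega) (by omega)).1
      rwa [show j+1-1 = j by omega, hs2v j hj1] at this
  exact ⟨u, ⟨hdeg3, hlc3, hev3, rdu, hnegu⟩, hScu, hTbu⟩


set_option maxHeartbeats 1000000 in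
lemma stepB (t : ℕ) (p0 p1 p2 p3 : Polynomial ℝ) (c0 c1 c2 : ℝ)
    (ra rb rc : ℕ → ℝ)
    (hrece : p3 = 20 * X * p2 + 8*(3-8*X)*p1 - 384*X^2*p0)
    (hc0 : 0 < c0) (hc1 : 0 < c1) (hc2 : 0 < c2)
    (h3pos : 0 < 20*c2 - 64*c1 - 384*c0)
    (P0 : Pack p0 (t+1) c0 ra) (P1 : Pack p1 (t+2) c1 rb) (P2 : Pack p2 (t+2) c2 rc)
    (Sab : Shifted (t+1) (t+2) ra rb) (Sbc : Shifted (t+2) (t+2) rb rc)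
    (Tac : TwoApart (t+1) ra rc) :
    ∃ u, Pack p3 (t+3) (20*c2 - 64*c1 - 384*c0) u ∧
      Shifted (t+2) (t+3) rc u ∧ TwoApart (t+2) rb u := by
  obtain ⟨deg0, lc0, ev0, rd0, neg0⟩ := P0
  obtain ⟨deg1, lc1, ev1, rd1, neg1⟩ := P1
  obtain ⟨deg2, lc2, ev2, rd2, neg2⟩ := P2
  have hlc0 : 0 < p0.leadingCoeff := by rw [lc0]; exact hc0
  have hlc1 : 0 < p1.leadingCoeff := by rw [lc1]; exact hc1
  have hlc2 : 0 < p2.leadingCoeff := by rw [lc2]; exact hc2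
  have hne1 : p1 ≠ 0 := leadingCoeff_ne_zero.mp (ne_of_gt hlc1)
  have hne2 : p2 ≠ 0 := leadingCoeff_ne_zero.mp (ne_of_gt hlc2)
  -- C-normal form
  have hW' : p3 = C 20 * (X * p2) + C 24 * p1 - C 64 * (X * p1) - C 384 * (X * (X * p0)) := by
    rw [hrece]; simp only [map_ofNat]; ring
  -- natDegree bound
  have hd3le : p3.natDegree ≤ t + 3 := by
    rw [hW']
    refine (natDegree_sub_le _ _).trans (max_le ((natDegree_sub_le _ _).trans
      (max_le ((natDegree_add_le _ _).trans (max_le ?_ ?_)) ?_)) ?_)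
    · refine (natDegree_C_mul_le _ _).trans (natDegree_mul_le.trans ?_)
      rw [natDegree_X, deg2]; omega
    · exact (natDegree_C_mul_le _ _).trans (by rw [deg1]; omega)
    · refine (natDegree_C_mul_le _ _).trans (natDegree_mul_le.trans ?_)
      rw [natDegree_X, deg1]; omega
    · refine (natDegree_C_mul_le _ _).trans (natDegree_mul_le.trans ?_)
      have : (X * p0).natDegree ≤ 1 + (t+1) := natDegree_mul_le.trans (by rw [natDegree_X, deg0])
      rw [natDegree_X]; omega
  -- top coefficient
  have htop2 : p2.coeff (t+2) = c2 := by rw [← deg2, coeff_natDegree]; exact lc2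
  have htop1 : p1.coeff (t+2) = c1 := by rw [← deg1, coeff_natDegree]; exact lc1
  have htop0 : p0.coeff (t+1) = c0 := by rw [← deg0, coeff_natDegree]; exact lc0
  have hcoeff : p3.coeff (t+3) = 20*c2 - 64*c1 - 384*c0 := by
    have e2 : (X * p2).coeff (t+3) = p2.coeff (t+2) := by
      rw [show t+3 = (t+2)+1 by omega, coeff_X_mul]
    have e1 : (X * p1).coeff (t+3) = p1.coeff (t+2) := by
      rw [show t+3 = (t+2)+1 by omega, coeff_X_mul]
    have e0 : (X * (X * p0)).coeff (t+3) = p0.coeff (t+1) := by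
      rw [show t+3 = (t+2)+1 by omega, coeff_X_mul,
        show t+2 = (t+1)+1 by omega, coeff_X_mul]
    have hz : p1.coeff (t+3) = 0 := coeff_eq_zero_of_natDegree_lt (by rw [deg1]; omega)
    rw [hW']
    simp only [coeff_sub, coeff_add, coeff_C_mul, e2, e1, e0, hz, htop2, htop1, htop0]
    ring
  have hdeg3 : p3.natDegree = t+3 :=
    le_antisymm hd3le (le_natDegree_of_ne_zero (by rw [hcoeff]; exact ne_of_gt h3pos))
  have hlc3 : p3.leadingCoeff = 20*c2 - 64*c1 - 384*c0 := by
    rw [← coeff_natDegree, hdeg3, hcoeff]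
  have hlc3pos : 0 < p3.leadingCoeff := by rw [hlc3]; exact h3pos
  have hne3 : p3 ≠ 0 := leadingCoeff_ne_zero.mp (ne_of_gt hlc3pos)
  have hev3 : 0 < p3.eval 0 := by
    rw [hW']
    simp only [eval_sub, eval_add, eval_mul, eval_C, eval_X, zero_mul, mul_zero, sub_zero]
    linarith
  -- roots as values
  have hroot1 : ∀ i, 1 ≤ i → i ≤ t+2 → p1.eval (rb i) = 0 := fun i h1 h2 =>
    rd_eval_zero rd1 i h1 h2
  have hroot2 : ∀ i, 1 ≤ i → i ≤ t+2 → p2.eval (rc i) = 0 := fun i h1 h2 =>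
    rd_eval_zero rd2 i h1 h2
  have hmono1 := rd1.2.2
  have hmono2 := rd2.2.2
  -- ==================== chain 1 : points at roots of p1 ====================
  obtain ⟨b, hbβ, hbsign⟩ := exists_far_left p3 (t+3) hdeg3 (by omega) hlc3pos (rb 1)
  set s1 : ℕ → ℝ := fun i => if i = 0 then b else if i ≤ t+2 then rb i else 0 with hs1
  have hs1v : ∀ i, 1 ≤ i → i ≤ t+2 → s1 i = rb i := by
    intro i h1 h2; simp only [hs1]; rw [if_neg (by omega), if_pos h2]
  have hs1top : s1 (t+3) = 0 := by simp only [hs1]; rw [if_neg (by omega), if_neg (by omega)]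
  have hs1b : s1 0 = b := by simp [hs1]
  have hs1mono : ∀ i j, i < j → j ≤ t+3 → s1 i < s1 j := by
    intro i j hij hj
    rcases Nat.eq_zero_or_pos i with rfl | hipos
    · rw [hs1b]
      rcases Nat.lt_or_ge j (t+3) with h | h
      · rw [hs1v j (by omega) (by omega)]
        rcases Nat.eq_or_lt_of_le (show 1 ≤ j by omega) with h' | h'
        · rw [← h']; exact hbβ
        · exact hbβ.trans (hmono1 1 j le_rfl h' (by omega))
      · have : j = t+3 := by omega
        rw [this, hs1top]
        exact hbβ.trans (neg1 1 le_rfl (by omega))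
    · have hi : i ≤ t+2 := by omega
      rw [hs1v i hipos hi]
      rcases Nat.lt_or_ge j (t+3) with h | h
      · rw [hs1v j (by omega) (by omega)]
        exact hmono1 i j hipos hij (by omega)
      · have : j = t+3 := by omega
        rw [this, hs1top]
        exact neg1 i hipos hi
  have hs1sign : ∀ i, i ≤ t+3 → 0 < (-1:ℝ)^(t+3+i) * p3.eval (s1 i) := by
    intro i hi
    rcases Nat.eq_zero_or_pos i with rfl | hipos
    · rw [hs1b]; simpa using hbsign
    rcases Nat.lt_or_ge i (t+3) with hilt | hige
    · have hile : i ≤ t+2 := by omega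
      rw [hs1v i hipos hile]
      have hy : rb i < 0 := neg1 i hipos hile
      have hyroot : p1.eval (rb i) = 0 := hroot1 i hipos hile
      -- sign of p2 at rb i
      have hE2 : 0 < (-1:ℝ)^(t+2+i) * p2.eval (rb i) := by
        apply sign_eval p2 (t+2) rc deg2 hlc2 rd2 (rb i) i (by omega)
        · intro j hj1 hj2
          rcases Nat.eq_or_lt_of_le hj2 with h' | h'
          · rw [h']; exact Sbc.1 i hipos hile
          · exact (hmono2 j i hj1 h' (by omega)).trans (Sbc.1 i hipos hile)
        · intro j hj1 hj2
          have h1 : rb i < rc (i+1) := Sbc.2 i hipos (by omega)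
          rcases Nat.eq_or_lt_of_le hj1 with h' | h'
          · rw [← h']; exact h1
          · exact h1.trans (hmono2 (i+1) j (by omega) h' hj2)
      -- sign of p0 at rb i
      have hE0 : 0 < (-1:ℝ)^(t+1+(i-1)) * p0.eval (rb i) := by
        apply sign_eval p0 (t+1) ra deg0 hlc0 rd0 (rb i) (i-1) (by omega)
        · intro j hj1 hj2
          have h1 : ra (i-1) < rb i := by
            have := Sab.2 (i-1) (by omega) (by omega)
            rwa [show i-1+1 = i by omega] at this
          rcases Nat.eq_or_lt_of_le hj2 with h' | h'
          · rw [h']; exact h1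
          · exact (rd0.2.2 j (i-1) hj1 h' (by omega)).trans h1
        · intro j hj1 hj2
          have h1 : rb i < ra i := Sab.1 i hipos (by omega)
          have hj1' : i ≤ j := by omega
          rcases Nat.eq_or_lt_of_le hj1' with h' | h'
          · rw [← h']; exact h1
          · exact h1.trans (rd0.2.2 i j hipos h' hj2)
      rw [show t+1+(i-1) = t+i by omega] at hE0
      rw [show t+2+i = (t+i)+2 by omega, neg_one_pow_add_two] at hE2
      rw [show t+3+i = (t+i)+2+1 by omega, neg_one_pow_succ', neg_one_pow_add_two]
      have hPy : p3.eval (rb i)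
          = 20 * (rb i * p2.eval (rb i)) - 384*(rb i * rb i * p0.eval (rb i)) := by
        rw [hW']
        simp only [eval_sub, eval_add, eval_mul, eval_C, eval_X, hyroot, mul_zero]
        ring
      rw [hPy]
      nlinarith [hE2, hE0, mul_pos (neg_pos.mpr hy) hE2,
        mul_pos (mul_pos_of_neg_of_neg hy hy) hE0]
    · have hieq : i = t+3 := by omega
      rw [hieq, hs1top, show t+3+(t+3) = 2*(t+3) by omega, neg_one_pow_two_mul']
      simpa using hev3
  obtain ⟨u, rdu, hu⟩ := count_roots p3 (t+3) (by omega) hdeg3 hne3 s1 hs1mono hs1sign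
  have hTbu : TwoApart (t+2) rb u := by
    intro j hj1 hj2
    constructor
    · have := (hu j hj1 (by omega)).2
      rwa [hs1v j hj1 hj2] at this
    · have := (hu (j+1) (by omega) (by omega)).1
      rwa [show j+1-1 = j by omega, hs1v j hj1 hj2] at this
  have hnegu : ∀ i, 1 ≤ i → i ≤ t+3 → u i < 0 := by
    intro i h1 h2
    have h3 := (hu i h1 h2).2
    rcases Nat.lt_or_ge i (t+3) with h | h
    · rw [hs1v i h1 (by omega)] at h3
      exact h3.trans (neg1 i h1 (by omega))
    · have hieq : i = t+3 := by omega
      subst hieq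
      rwa [hs1top] at h3
  -- ==================== chain 2 : points at roots of p2 ====================
  obtain ⟨b', hb'β, hb'sign⟩ := exists_far_left p3 (t+3) hdeg3 (by omega) hlc3pos (rc 1)
  set s2 : ℕ → ℝ := fun i => if i = 0 then b' else if i ≤ t+2 then rc i else 0 with hs2
  have hs2v : ∀ i, 1 ≤ i → i ≤ t+2 → s2 i = rc i := by
    intro i h1 h2; simp only [hs2]; rw [if_neg (by omega), if_pos h2]
  have hs2top : s2 (t+3) = 0 := by simp only [hs2]; rw [if_neg (by omega), if_neg (by omega)]
  have hs2b : s2 0 = b' := by simp [hs2]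
  have hs2mono : ∀ i j, i < j → j ≤ t+3 → s2 i < s2 j := by
    intro i j hij hj
    rcases Nat.eq_zero_or_pos i with rfl | hipos
    · rw [hs2b]
      rcases Nat.lt_or_ge j (t+3) with h | h
      · rw [hs2v j (by omega) (by omega)]
        rcases Nat.eq_or_lt_of_le (show 1 ≤ j by omega) with h' | h'
        · rw [← h']; exact hb'β
        · exact hb'β.trans (hmono2 1 j le_rfl h' (by omega))
      · have : j = t+3 := by omega
        rw [this, hs2top]
        exact hb'β.trans (neg2 1 le_rfl (by omega))
    · have hi : i ≤ t+2 := by omega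
      rw [hs2v i hipos hi]
      rcases Nat.lt_or_ge j (t+3) with h | h
      · rw [hs2v j (by omega) (by omega)]
        exact hmono2 i j hipos hij (by omega)
      · have : j = t+3 := by omega
        rw [this, hs2top]
        exact neg2 i hipos hi
  have hs2sign : ∀ i, i ≤ t+3 → 0 < (-1:ℝ)^(t+3+i) * p3.eval (s2 i) := by
    intro i hi
    rcases Nat.eq_zero_or_pos i with rfl | hipos
    · rw [hs2b]; simpa using hb'sign
    rcases Nat.lt_or_ge i (t+3) with hilt | hige
    · have hile : i ≤ t+2 := by omega
      rw [hs2v i hipos hile]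
      have hz : rc i < 0 := neg2 i hipos hile
      have hzroot : p2.eval (rc i) = 0 := hroot2 i hipos hile
      -- sign of p1 at rc i
      have hE1 : 0 < (-1:ℝ)^(t+2+(i-1)) * p1.eval (rc i) := by
        apply sign_eval p1 (t+2) rb deg1 hlc1 rd1 (rc i) (i-1) (by omega)
        · intro j hj1 hj2
          have h1 : rb (i-1) < rc i := by
            have := Sbc.2 (i-1) (by omega) (by omega)
            rwa [show i-1+1 = i by omega] at this
          rcases Nat.eq_or_lt_of_le hj2 with h' | h'
          · rw [h']; exact h1
          · exact (hmono1 j (i-1) hj1 h' (by omega)).trans h1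
        · intro j hj1 hj2
          have h1 : rc i < rb i := Sbc.1 i hipos hile
          have hj1' : i ≤ j := by omega
          rcases Nat.eq_or_lt_of_le hj1' with h' | h'
          · rw [← h']; exact h1
          · exact h1.trans (hmono1 i j hipos h' hj2)
      -- sign of p0 at rc i
      have hE0 : 0 < (-1:ℝ)^(t+1+(i-1)) * p0.eval (rc i) := by
        apply sign_eval p0 (t+1) ra deg0 hlc0 rd0 (rc i) (i-1) (by omega)
        · intro j hj1 hj2
          have h1 : ra (i-1) < rc i := by
            have := (Tac (i-1) (by omega) (by omega)).2
            rwa [show i-1+1 = i by omega] at this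
          rcases Nat.eq_or_lt_of_le hj2 with h' | h'
          · rw [h']; exact h1
          · exact (rd0.2.2 j (i-1) hj1 h' (by omega)).trans h1
        · intro j hj1 hj2
          have h1 : rc i < ra i := (Tac i hipos (by omega)).1
          have hj1' : i ≤ j := by omega
          rcases Nat.eq_or_lt_of_le hj1' with h' | h'
          · rw [← h']; exact h1
          · exact h1.trans (rd0.2.2 i j hipos h' hj2)
      rw [show t+1+(i-1) = t+i by omega] at hE0
      rw [show t+2+(i-1) = (t+i)+1 by omega, neg_one_pow_succ'] at hE1
      rw [show t+3+i = (t+i)+2+1 by omega, neg_one_pow_succ', neg_one_pow_add_two]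
      have hPz : p3.eval (rc i)
          = 24 * p1.eval (rc i) - 64*(rc i * p1.eval (rc i))
            - 384*(rc i * rc i * p0.eval (rc i)) := by
        rw [hW']
        simp only [eval_sub, eval_add, eval_mul, eval_C, eval_X, hzroot, mul_zero]
        ring
      rw [hPz]
      have hSE1 : (-1:ℝ)^(t+i) * p1.eval (rc i) < 0 := by nlinarith [hE1]
      nlinarith [hE1, hE0, mul_pos_of_neg_of_neg hz hSE1,
        mul_pos (mul_pos_of_neg_of_neg hz hz) hE0]
    · have hieq : i = t+3 := by omega
      rw [hieq, hs2top, show t+3+(t+3) = 2*(t+3) by omega, neg_one_pow_two_mul']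
      simpa using hev3
  obtain ⟨v, rdv, hv⟩ := count_roots p3 (t+3) (by omega) hdeg3 hne3 s2 hs2mono hs2sign
  have huv : ∀ i, 1 ≤ i → i ≤ t+3 → u i = v i := by
    apply sorted_unique (t+3) u v rdu.2.2 rdv.2.2
    rw [← rdu.2.1, ← rdv.2.1]
  have hScu : Shifted (t+2) (t+3) rc u := by
    constructor
    · intro j hj1 hj2
      rw [huv j hj1 (by omega)]
      have := (hv j hj1 (by omega)).2
      rwa [hs2v j hj1 hj2] at this
    · intro j hj1 hj2
      rw [huv (j+1) (by omega) (by omega)]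
      have := (hv (j+1) (by omega) (by omega)).1
      rwa [show j+1-1 = j by omega, hs2v j hj1 (by omega)] at this
  exact ⟨u, ⟨hdeg3, hlc3, hev3, rdu, hnegu⟩, hScu, hTbu⟩


noncomputable def cseq : ℕ → ℝ
  | 0 => 2
  | 1 => 24
  | (k+2) => 8 * cseq (k+1) + 32 * cseq k

lemma cseq_pos : ∀ k, 0 < cseq k := by
  intro k
  induction k using Nat.strong_induction_on with
  | _ k ih =>
    match k with
    | 0 => norm_num [cseq]
    | 1 => norm_num [cseq]
    | (k+2) =>
      have h1 := ih (k+1) (by omega)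
      have h2 := ih k (by omega)
      show 0 < 8 * cseq (k+1) + 32 * cseq k
      nlinarith

lemma cseq_cubic (k : ℕ) :
    cseq (k+3) = 20 * cseq (k+2) - 64 * cseq (k+1) - 384 * cseq k := by
  show 8 * cseq (k+2) + 32 * cseq (k+1)
      = 20 * cseq (k+2) - 64 * cseq (k+1) - 384 * cseq k
  have h : cseq (k+2) = 8 * cseq (k+1) + 32 * cseq k := rfl
  linarith

def dd (n : ℕ) : ℕ := (n+2)/2

def Invar (W : ℕ → Polynomial ℝ) (n : ℕ) : Prop :=
  ∃ ra rb rc : ℕ → ℝ,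
    Pack (W n) (dd n) (cseq n) ra ∧
    Pack (W (n+1)) (dd (n+1)) (cseq (n+1)) rb ∧
    Pack (W (n+2)) (dd (n+2)) (cseq (n+2)) rc ∧
    Shifted (dd n) (dd (n+1)) ra rb ∧
    Shifted (dd (n+1)) (dd (n+2)) rb rc ∧
    TwoApart (dd n) ra rc

set_option maxHeartbeats 1000000 in
lemma invar_zero (W : ℕ → Polynomial ℝ)
    (h0 : W 0 = 2 * (1 + X)) (h1 : W 1 = 8 * (5 + 3 * X))
    (h2 : W 2 = 16 * (3 + 45 * X + 16 * X ^ 2)) : Invar W 0 := by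
  have hW0 : W 0 = C 2 + C 2 * X := by
    rw [h0]; simp only [map_ofNat]; ring
  have hW1 : W 1 = C 40 + C 24 * X := by
    rw [h1]; simp only [map_ofNat]; ring
  have hW2 : W 2 = C 48 + C 720 * X + C 256 * X^2 := by
    rw [h2]; simp only [map_ofNat]; ring
  -- degrees
  have deg0 : (W 0).natDegree = 1 := by rw [h0]; compute_degree!
  have deg1 : (W 1).natDegree = 1 := by rw [h1]; compute_degree!
  have deg2 : (W 2).natDegree = 2 := by rw [h2]; compute_degree!
  have lc0 : (W 0).leadingCoeff = cseq 0 := by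
    rw [← coeff_natDegree, deg0, hW0]
    have e : (C 2 + C 2 * X : Polynomial ℝ).coeff 1 = 2 := by simp
    rw [e]; norm_num [cseq]
  have lc1 : (W 1).leadingCoeff = cseq 1 := by
    rw [← coeff_natDegree, deg1, hW1]
    have e : (C 40 + C 24 * X : Polynomial ℝ).coeff 1 = 24 := by simp
    rw [e]; norm_num [cseq]
  have lc2 : (W 2).leadingCoeff = cseq 2 := by
    rw [← coeff_natDegree, deg2, hW2]
    have e : (C 48 + C 720 * X + C 256 * X^2 : Polynomial ℝ).coeff 2 = 256 := by
      simp [coeff_X_pow]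
    rw [e]; show (256:ℝ) = 8 * cseq 1 + 32 * cseq 0
    norm_num [cseq]
  have hcs0 : cseq 0 = 2 := rfl
  have hcs1 : cseq 1 = 24 := rfl
  have hlcpos0 : 0 < (W 0).leadingCoeff := by rw [lc0, hcs0]; norm_num
  have hlcpos1 : 0 < (W 1).leadingCoeff := by rw [lc1, hcs1]; norm_num
  have hlcpos2 : 0 < (W 2).leadingCoeff := by rw [lc2]; exact cseq_pos 2
  have hne0 : W 0 ≠ 0 := leadingCoeff_ne_zero.mp (ne_of_gt hlcpos0)
  have hne1 : W 1 ≠ 0 := leadingCoeff_ne_zero.mp (ne_of_gt hlcpos1)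
  have hne2 : W 2 ≠ 0 := leadingCoeff_ne_zero.mp (ne_of_gt hlcpos2)
  have ev0 : 0 < (W 0).eval 0 := by rw [hW0]; simp
  have ev1 : 0 < (W 1).eval 0 := by rw [hW1]; simp
  have ev2 : 0 < (W 2).eval 0 := by rw [hW2]; simp
  -- evaluation helpers
  have e0 : ∀ x : ℝ, (W 0).eval x = 2 + 2*x := by intro x; rw [hW0]; simp
  have e1 : ∀ x : ℝ, (W 1).eval x = 40 + 24*x := by intro x; rw [hW1]; simp
  have e2 : ∀ x : ℝ, (W 2).eval x = 48 + 720*x + 256*x^2 := by intro x; rw [hW2]; simp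
  -- chain for W 0
  obtain ⟨u0, rdu0, hu0⟩ := count_roots (W 0) 1 le_rfl deg0 hne0
    (fun i => if i = 0 then (-3/2 : ℝ) else -1/2)
    (by
      intro i j hij hj
      have h : i = 0 ∧ j = 1 := by omega
      obtain ⟨rfl, rfl⟩ := h
      norm_num)
    (by
      intro i hi
      interval_cases i <;> simp [e0] <;> norm_num)
  have hu01 := hu0 1 le_rfl le_rfl
  norm_num at hu01
  -- chain for W 1
  obtain ⟨u1, rdu1, hu1⟩ := count_roots (W 1) 1 le_rfl deg1 hne1
    (fun i => if i = 0 then (-7/4 : ℝ) else -8/5)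
    (by
      intro i j hij hj
      have h : i = 0 ∧ j = 1 := by omega
      obtain ⟨rfl, rfl⟩ := h
      norm_num)
    (by
      intro i hi
      interval_cases i <;> simp [e1] <;> norm_num)
  have hu11 := hu1 1 le_rfl le_rfl
  norm_num at hu11
  -- chains for W 2
  obtain ⟨uA, rduA, huA⟩ := count_roots (W 2) 2 one_le_two deg2 hne2
    (fun i => if i = 0 then (-3 : ℝ) else if i = 1 then -7/4 else -1/16)
    (by
      intro i j hij hj
      have hi : i ≤ 1 := by omega
      interval_cases i <;> interval_cases j <;> norm_num)
    (by
      intro i hi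
      interval_cases i <;> simp [e2] <;> norm_num)
  obtain ⟨uB, rduB, huB⟩ := count_roots (W 2) 2 one_le_two deg2 hne2
    (fun i => if i = 0 then (-3 : ℝ) else if i = 1 then -1/2 else -1/16)
    (by
      intro i j hij hj
      have hi : i ≤ 1 := by omega
      interval_cases i <;> interval_cases j <;> norm_num)
    (by
      intro i hi
      interval_cases i <;> simp [e2] <;> norm_num)
  have hAB : ∀ i, 1 ≤ i → i ≤ 2 → uA i = uB i := by
    apply sorted_unique 2 uA uB rduA.2.2 rduB.2.2
    rw [← rduA.2.1, ← rduB.2.1]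
  have huA1 := huA 1 le_rfl one_le_two
  have huA2 := huA 2 one_le_two le_rfl
  have huB2 := huB 2 one_le_two le_rfl
  norm_num at huA1 huA2 huB2
  rw [← hAB 2 one_le_two le_rfl] at huB2
  -- assemble
  have dd0 : dd 0 = 1 := rfl
  have dd1 : dd 1 = 1 := rfl
  have dd2 : dd 2 = 2 := rfl
  refine ⟨u0, u1, uA, ?_, ?_, ?_, ?_, ?_, ?_⟩
  · rw [dd0]
    exact ⟨deg0, lc0, ev0, rdu0, by
      intro i hi1 hi2
      have h : i = 1 := by omega
      rw [h]; linarith [hu01.2]⟩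
  · rw [dd1]
    exact ⟨deg1, lc1, ev1, rdu1, by
      intro i hi1 hi2
      have h : i = 1 := by omega
      rw [h]; linarith [hu11.2]⟩
  · rw [dd2]
    exact ⟨deg2, lc2, ev2, rduA, by
      intro i hi1 hi2
      interval_cases i
      · linarith [huA1.2]
      · linarith [huA2.2]⟩
  · rw [dd0, dd1]
    constructor
    · intro j hj1 hj2
      have h : j = 1 := by omega
      rw [h]; linarith [hu11.2, hu01.1]
    · intro j hj1 hj2; omega
  · rw [dd1, dd2]
    constructor
    · intro j hj1 hj2
      have h : j = 1 := by omega
      rw [h]; linarith [huA1.2, hu11.1]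
    · intro j hj1 hj2
      have h : j = 1 := by omega
      rw [h]; linarith [hu11.2, huB2.1]
  · rw [dd0]
    intro j hj1 hj2
    have h : j = 1 := by omega
    rw [h]
    constructor
    · linarith [huA1.2, hu01.1]
    · linarith [hu01.2, huB2.1]

lemma invar_all (W : ℕ → Polynomial ℝ)
    (h0 : W 0 = 2 * (1 + X)) (h1 : W 1 = 8 * (5 + 3 * X))
    (h2 : W 2 = 16 * (3 + 45 * X + 16 * X ^ 2))
    (hrec : ∀ n, (Even (n + 3) → W (n + 3) =
        20 * X * W (n + 2) + 8 * (3 - 8 * X) * W (n + 1) - 384 * X ^ 2 * W n) ∧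
      (Odd (n + 3) → W (n + 3) =
        20 * W (n + 2) + 8 * (3 - 8 * X) * W (n + 1) - 384 * X * W n)) :
    ∀ n, Invar W n := by
  intro n
  induction n with
  | zero => exact invar_zero W h0 h1 h2
  | succ n ih =>
    obtain ⟨ra, rb, rc, PA, PB, PC, Sab, Sbc, Tac⟩ := ih
    rcases Nat.even_or_odd n with he | ho
    · -- n = 2t : odd recurrence for n+3
      obtain ⟨t, ht⟩ := he
      have hn : n = 2*t := by omega
      subst hn
      have hodd : Odd (2*t + 3) := ⟨t+1, by ring⟩
      have hrece := (hrec (2*t)).2 hodd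
      have d0 : dd (2*t) = t+1 := by simp only [dd]; omega
      have d1 : dd (2*t+1) = t+1 := by simp only [dd]; omega
      have d2 : dd (2*t+2) = t+2 := by simp only [dd]; omega
      have d3 : dd (2*t+3) = t+2 := by simp only [dd]; omega
      rw [d0] at PA Sab Tac
      rw [d1] at PB Sab Sbc
      rw [d2] at PC Sbc
      have hcub := cseq_cubic (2*t)
      have h3pos : 0 < 20 * cseq (2*t+2) - 64 * cseq (2*t+1) - 384 * cseq (2*t) := by
        rw [← hcub]; exact cseq_pos _
      obtain ⟨u, P3, Scu, Tbu⟩ := stepA t (W (2*t)) (W (2*t+1)) (W (2*t+2)) (W (2*t+3))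
        (cseq (2*t)) (cseq (2*t+1)) (cseq (2*t+2)) ra rb rc hrece
        (cseq_pos _) (cseq_pos _) (cseq_pos _) h3pos PA PB PC Sab Sbc Tac
      rw [← hcub] at P3
      refine ⟨rb, rc, u, ?_, ?_, ?_, ?_, ?_, ?_⟩
      · rw [d1]; exact PB
      · rw [show 2*t+1+1 = 2*t+2 by omega, d2]; exact PC
      · rw [show 2*t+1+2 = 2*t+3 by omega, d3]; exact P3
      · rw [d1, show 2*t+1+1 = 2*t+2 by omega, d2]; exact Sbc
      · rw [show 2*t+1+1 = 2*t+2 by omega, show 2*t+1+2 = 2*t+3 by omega, d2, d3]; exact Scu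
      · rw [d1]; exact Tbu
    · -- n = 2t+1 : even recurrence for n+3
      obtain ⟨t, ht⟩ := ho
      subst ht
      have heven : Even (2*t+1 + 3) := ⟨t+2, by ring⟩
      have hrece := (hrec (2*t+1)).1 heven
      rw [show 2*t+1+3 = 2*t+4 by omega, show 2*t+1+2 = 2*t+3 by omega,
        show 2*t+1+1 = 2*t+2 by omega] at hrece
      have d0 : dd (2*t+1) = t+1 := by simp only [dd]; omega
      have d1 : dd (2*t+2) = t+2 := by simp only [dd]; omega
      have d2 : dd (2*t+3) = t+2 := by simp only [dd]; omega
      have d3 : dd (2*t+4) = t+3 := by simp only [dd]; omega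
      rw [show 2*t+1+1 = 2*t+2 by omega] at PB Sab Sbc
      rw [show 2*t+1+2 = 2*t+3 by omega] at PC Sbc
      rw [d0] at PA Sab Tac
      rw [d1] at PB Sab Sbc
      rw [d2] at PC Sbc
      have hcub : cseq (2*t+4)
          = 20 * cseq (2*t+3) - 64 * cseq (2*t+2) - 384 * cseq (2*t+1) := by
        have := cseq_cubic (2*t+1)
        rwa [show 2*t+1+3 = 2*t+4 by omega, show 2*t+1+2 = 2*t+3 by omega,
          show 2*t+1+1 = 2*t+2 by omega] at this
      have h3pos : 0 < 20 * cseq (2*t+3) - 64 * cseq (2*t+2) - 384 * cseq (2*t+1) := by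
        rw [← hcub]; exact cseq_pos _
      obtain ⟨u, P3, Scu, Tbu⟩ := stepB t (W (2*t+1)) (W (2*t+2)) (W (2*t+3)) (W (2*t+4))
        (cseq (2*t+1)) (cseq (2*t+2)) (cseq (2*t+3)) ra rb rc hrece
        (cseq_pos _) (cseq_pos _) (cseq_pos _) h3pos PA PB PC Sab Sbc Tac
      rw [← hcub] at P3
      refine ⟨rb, rc, u, ?_, ?_, ?_, ?_, ?_, ?_⟩
      · rw [show 2*t+1+1 = 2*t+2 by omega, d1]; exact PB
      · rw [show 2*t+1+1+1 = 2*t+3 by omega, d2]; exact PC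
      · rw [show 2*t+1+1+2 = 2*t+4 by omega, d3]; exact P3
      · rw [show 2*t+1+1 = 2*t+2 by omega, show 2*t+1+1+1 = 2*t+3 by omega, d1, d2]
        exact Sbc
      · rw [show 2*t+1+1+1 = 2*t+3 by omega, show 2*t+1+1+2 = 2*t+4 by omega, d2, d3]
        exact Scu
      · rw [show 2*t+1+1 = 2*t+2 by omega, d1]; exact Tbu

theorem stmt12 (W : ℕ → Polynomial ℝ)
    (h0 : W 0 = 2 * (1 + X)) (h1 : W 1 = 8 * (5 + 3 * X))
    (h2 : W 2 = 16 * (3 + 45 * X + 16 * X ^ 2))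
    (hrec : ∀ n, (Even (n + 3) → W (n + 3) =
        20 * X * W (n + 2) + 8 * (3 - 8 * X) * W (n + 1) - 384 * X ^ 2 * W n) ∧
      (Odd (n + 3) → W (n + 3) =
        20 * W (n + 2) + 8 * (3 - 8 * X) * W (n + 1) - 384 * X * W n)) :
    ∀ n, 2 ≤ n → ∀ x y : ℕ → ℝ,
      (∀ i j, 1 ≤ i → i < j → j ≤ (n + 2) / 2 → x i < x j) →
      (∀ i j, 1 ≤ i → i < j → j ≤ n / 2 → y i < y j) →
      (W n).roots.card = (n + 2) / 2 →
      (W (n - 2)).roots.card = n / 2 →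
      (∀ i, 1 ≤ i → i ≤ (n + 2) / 2 → x i < 0) →
      (∀ i, 1 ≤ i → i ≤ n / 2 → y i < 0) →
      (W n).roots.toFinset = Finset.image x (Finset.Icc 1 ((n + 2) / 2)) →
      (W (n - 2)).roots.toFinset = Finset.image y (Finset.Icc 1 (n / 2)) →
      ∀ i, 1 ≤ i → i ≤ n / 2 → x i < y i ∧ y i < x (i + 1) := by
  intro n hn x y hxmono hymono _ _ _ _ hximg hyimg i hi1 hi2
  obtain ⟨k, rfl⟩ : ∃ k, n = k + 2 := ⟨n - 2, by omega⟩
  obtain ⟨ra, rb, rc, PA, _, PC, _, _, Tac⟩ := invar_all W h0 h1 h2 hrec k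
  have hdk : dd k = k/2 + 1 := by simp only [dd]; omega
  have hdk2 : dd (k+2) = k/2 + 2 := by simp only [dd]; omega
  have hq1 : (k+2+2)/2 = k/2 + 2 := by omega
  have hq2 : (k+2)/2 = k/2 + 1 := by omega
  have hsub : k + 2 - 2 = k := by omega
  rw [hq1] at hxmono hximg
  rw [hq2] at hymono hyimg hi2
  rw [hsub] at hyimg
  obtain ⟨degA, lcA, evA, rdA, negA⟩ := PA
  obtain ⟨degC, lcC, evC, rdC, negC⟩ := PC
  rw [hdk] at rdA Tac
  rw [hdk2] at rdC
  -- identify x with rc and y with ra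
  have hx : ∀ j, 1 ≤ j → j ≤ k/2 + 2 → x j = rc j := by
    apply sorted_unique (k/2+2) x rc hxmono rdC.2.2
    rw [← hximg, rdC.2.1]
  have hy : ∀ j, 1 ≤ j → j ≤ k/2 + 1 → y j = ra j := by
    apply sorted_unique (k/2+1) y ra hymono rdA.2.2
    rw [← hyimg, rdA.2.1]
  have hT := Tac i hi1 hi2
  refine ⟨?_, ?_⟩
  · rw [hx i hi1 (by omega), hy i hi1 hi2]
    exact hT.1
  · rw [hx (i+1) (by omega) (by omega), hy i hi1 hi2]
    exact hT.2
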